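/- Let x, v, w be an orthonormal triple in ℝ³ (so x ∈ S² and v, w are tangent at x). For s, t > 0 small, define the Schild's ladder construction: b(s,t) := Log_{Exp_x(sv)}(Exp_x(tw)), the midpoint m(s,t) := Exp_{Exp_x(sv)}(b(s,t)/2), a(s,t) := Log_x(m(s,t)), z(s,t) := Exp_x(2·a(s,t)), and the output u(s,t) := Log_{Exp_x(tw)}(z(s,t)). Then there exist δ > 0 and C > 0 such that for all s, t ∈ (0, δ) the construction is well defined and ‖u(s,t) − Π_x^{tw}(s·v + (s²t/2)·w)‖ ≤ C·(s + t)⁴. In other words, on the unit sphere one rung of Schild's ladder transporting sv along tw equals the exact parallel transport of sv plus the curvature correction (s²t/2)·(parallel transport of w), up to an error of total order four in (s,t); this is the constant-curvature instance of the third-order Taylor expansion u = v + ½R(w,v)v + O(4) of Schild's ladder, since R(w,v)v = w for orthonormal v, w on the unit sphere. -/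

import Mathlib

open scoped RealInnerProductSpace

noncomputable section
open Classical

/-- The closed-form Riemannian exponential of the unit sphere `S² ⊂ ℝ³`. -/
def sphExp (x w : EuclideanSpace ℝ (Fin 3)) : EuclideanSpace ℝ (Fin 3) :=
  if w = (0 : EuclideanSpace ℝ (Fin 3)) then x
  else Real.cos ‖w‖ • x + (Real.sin ‖w‖ / ‖w‖) • w

/-- The closed-form Riemannian logarithm of the unit sphere:
`Log_x(y) = arccos(⟨x,y⟩)·(y − ⟨x,y⟩x)/‖y − ⟨x,y⟩x‖`. -/
def sphLog (x y : EuclideanSpace ℝ (Fin 3)) : EuclideanSpace ℝ (Fin 3) :=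
  (Real.arccos ⟪x, y⟫ / ‖y - ⟪x, y⟫ • x‖) • (y - ⟪x, y⟫ • x)

/-- Parallel transport of a tangent vector `v` at `x ∈ S²` along the geodesic `t ↦ Exp_x(tw)`
to time 1: `Π_x^w(v) = ⟨v,ŵ⟩(−sin‖w‖·x + cos‖w‖·ŵ) + (v − ⟨v,ŵ⟩ŵ)` with `ŵ = w/‖w‖`. -/
def sphPar (x w v : EuclideanSpace ℝ (Fin 3)) : EuclideanSpace ℝ (Fin 3) :=
  ⟪v, ‖w‖⁻¹ • w⟫ • ((-Real.sin ‖w‖) • x + Real.cos ‖w‖ • (‖w‖⁻¹ • w))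
    + (v - ⟪v, ‖w‖⁻¹ • w⟫ • (‖w‖⁻¹ • w))

lemma cos_lt_one' {s : ℝ} (h0 : 0 < s) (hπ : s ≤ Real.pi) : Real.cos s < 1 := by
  have := Real.cos_lt_cos_of_nonneg_of_le_pi (le_refl 0) hπ h0
  simpa using this

lemma norm_eq_one_of_inner {y : EuclideanSpace ℝ (Fin 3)} (h : ⟪y, y⟫ = 1) : ‖y‖ = 1 := by
  rw [norm_eq_sqrt_real_inner, h, Real.sqrt_one]

lemma sphExp_smul_unit (x v : EuclideanSpace ℝ (Fin 3)) (s : ℝ) (hs : 0 < s) (hv : ‖v‖ = 1) :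
    sphExp x (s • v) = Real.cos s • x + Real.sin s • v := by
  have hv0 : v ≠ 0 := by intro h; rw [h, norm_zero] at hv; norm_num at hv
  have hne : s • v ≠ 0 := smul_ne_zero hs.ne' hv0
  have hn : ‖s • v‖ = s := by rw [norm_smul, hv, Real.norm_eq_abs, abs_of_pos hs, mul_one]
  rw [sphExp, if_neg hne, hn, smul_smul, div_mul_cancel₀ _ hs.ne']

lemma sphLog_eq {x y : EuclideanSpace ℝ (Fin 3)} (hx : ‖x‖ = 1) (hy : ‖y‖ = 1)
    (h1 : -1 < ⟪x, y⟫) (h2 : ⟪x, y⟫ < 1) :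
    sphLog x y
      = (Real.arccos ⟪x, y⟫ / Real.sin (Real.arccos ⟪x, y⟫)) • (y - ⟪x, y⟫ • x) := by
  have hxx : ⟪x, x⟫ = 1 := by rw [real_inner_self_eq_norm_sq, hx]; norm_num
  have hyy : ⟪y, y⟫ = 1 := by rw [real_inner_self_eq_norm_sq, hy]; norm_num
  have hnd : ‖y - ⟪x, y⟫ • x‖ = Real.sqrt (1 - ⟪x, y⟫ ^ 2) := by
    rw [norm_eq_sqrt_real_inner]
    congr 1
    simp only [inner_sub_left, inner_sub_right, real_inner_smul_left, real_inner_smul_right,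
      hxx, hyy, real_inner_comm y x]
    ring
  rw [sphLog, hnd, Real.sin_arccos]

lemma norm_smul_sub {x y : EuclideanSpace ℝ (Fin 3)} (hx : ‖x‖ = 1) (hy : ‖y‖ = 1) :
    ‖y - ⟪x, y⟫ • x‖ = Real.sin (Real.arccos ⟪x, y⟫) := by
  have hxx : ⟪x, x⟫ = 1 := by rw [real_inner_self_eq_norm_sq, hx]; norm_num
  have hyy : ⟪y, y⟫ = 1 := by rw [real_inner_self_eq_norm_sq, hy]; norm_num
  rw [Real.sin_arccos, norm_eq_sqrt_real_inner]
  congr 1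
  simp only [inner_sub_left, inner_sub_right, real_inner_smul_left, real_inner_smul_right,
    hxx, hyy, real_inner_comm y x]
  ring

lemma sphExp_half_log {x y : EuclideanSpace ℝ (Fin 3)} (hx : ‖x‖ = 1) (hy : ‖y‖ = 1)
    (h1 : -1 < ⟪x, y⟫) (h2 : ⟪x, y⟫ < 1) :
    ∃ k : ℝ, 0 < k ∧ k ^ 2 * (2 + 2 * ⟪x, y⟫) = 1 ∧
      sphExp x ((1 / 2 : ℝ) • sphLog x y) = k • (x + y) := by
  set c := ⟪x, y⟫ with hc
  set θ := Real.arccos c with hθdef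
  have hθ0 : 0 < θ := Real.arccos_pos.2 h2
  have hθπ : θ < Real.pi := by
    rcases lt_or_eq_of_le (Real.arccos_le_pi c) with h | h
    · exact h
    · exfalso
      have : Real.cos θ = c := Real.cos_arccos h1.le h2.le
      rw [hθdef, h, Real.cos_pi] at this
      linarith
  have hcos : Real.cos θ = c := Real.cos_arccos h1.le h2.le
  have hsinθ : 0 < Real.sin θ := Real.sin_pos_of_pos_of_lt_pi hθ0 hθπ
  have hch : 0 < Real.cos (θ / 2) :=
    Real.cos_pos_of_mem_Ioo ⟨by linarith [Real.pi_pos], by linarith⟩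
  have hsh : 0 < Real.sin (θ / 2) :=
    Real.sin_pos_of_pos_of_lt_pi (by linarith) (by linarith [Real.pi_pos])
  have hsin2 : Real.sin θ = 2 * Real.sin (θ / 2) * Real.cos (θ / 2) := by
    nth_rewrite 1 [show θ = 2 * (θ / 2) by ring]
    exact Real.sin_two_mul _
  have hcos2 : c = 2 * Real.cos (θ / 2) ^ 2 - 1 := by
    nth_rewrite 1 [← hcos]
    nth_rewrite 1 [show θ = 2 * (θ / 2) by ring]
    exact Real.cos_two_mul _
  have hL : sphLog x y = (θ / Real.sin θ) • (y - c • x) := sphLog_eq hx hy h1 h2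
  have hhalf : (1 / 2 : ℝ) • sphLog x y = (θ / (2 * Real.sin θ)) • (y - c • x) := by
    rw [hL, smul_smul]; congr 1; field_simp
  have hdnorm : ‖y - c • x‖ = Real.sin θ := norm_smul_sub hx hy
  have hcoefpos : 0 < θ / (2 * Real.sin θ) := by positivity
  have hnrm : ‖(θ / (2 * Real.sin θ)) • (y - c • x)‖ = θ / 2 := by
    rw [norm_smul, Real.norm_eq_abs, abs_of_pos hcoefpos, hdnorm]
    field_simp
  have hne : (θ / (2 * Real.sin θ)) • (y - c • x) ≠ 0 := by
    intro h; rw [h, norm_zero] at hnrm; linarith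
  refine ⟨(2 * Real.cos (θ / 2))⁻¹, by positivity, ?_, ?_⟩
  · rw [hcos2]; field_simp; ring
  · rw [hhalf, sphExp, if_neg hne, hnrm, smul_smul]
    have hcoef : Real.sin (θ / 2) / (θ / 2) * (θ / (2 * Real.sin θ)) =
        (2 * Real.cos (θ / 2))⁻¹ := by
      rw [hsin2]; field_simp
    rw [hcoef]
    match_scalars
    · rw [hcos2]; field_simp; ring
    · field_simp

lemma sphExp_two_log {x y : EuclideanSpace ℝ (Fin 3)} (hx : ‖x‖ = 1) (hy : ‖y‖ = 1)
    (h1 : -1 < ⟪x, y⟫) (h2 : ⟪x, y⟫ < 1) :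
    sphExp x ((2 : ℝ) • sphLog x y) = (2 * ⟪x, y⟫) • y - x := by
  set c := ⟪x, y⟫ with hc
  set θ := Real.arccos c with hθdef
  have hθ0 : 0 < θ := Real.arccos_pos.2 h2
  have hθπ : θ < Real.pi := by
    rcases lt_or_eq_of_le (Real.arccos_le_pi c) with h | h
    · exact h
    · exfalso
      have : Real.cos θ = c := Real.cos_arccos h1.le h2.le
      rw [hθdef, h, Real.cos_pi] at this
      linarith
  have hcos : Real.cos θ = c := Real.cos_arccos h1.le h2.le
  have hsinθ : 0 < Real.sin θ := Real.sin_pos_of_pos_of_lt_pi hθ0 hθπ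
  have hL : sphLog x y = (θ / Real.sin θ) • (y - c • x) := sphLog_eq hx hy h1 h2
  have htwo : (2 : ℝ) • sphLog x y = (2 * θ / Real.sin θ) • (y - c • x) := by
    rw [hL, smul_smul]; congr 1; ring
  have hdnorm : ‖y - c • x‖ = Real.sin θ := norm_smul_sub hx hy
  have hcoefpos : 0 < 2 * θ / Real.sin θ := by positivity
  have hnrm : ‖(2 * θ / Real.sin θ) • (y - c • x)‖ = 2 * θ := by
    rw [norm_smul, Real.norm_eq_abs, abs_of_pos hcoefpos, hdnorm]
    field_simp
  have hne : (2 * θ / Real.sin θ) • (y - c • x) ≠ 0 := by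
    intro h; rw [h, norm_zero] at hnrm; linarith
  rw [htwo, sphExp, if_neg hne, hnrm, smul_smul]
  have hsin2 : Real.sin (2 * θ) = 2 * Real.sin θ * Real.cos θ := Real.sin_two_mul θ
  have hcos2 : Real.cos (2 * θ) = 2 * c ^ 2 - 1 := by rw [Real.cos_two_mul, hcos]
  have hcoef : Real.sin (2 * θ) / (2 * θ) * (2 * θ / Real.sin θ) = 2 * c := by
    rw [hsin2, ← hcos]; field_simp
  rw [hcoef, hcos2]
  match_scalars <;> ring

lemma sphLog_eq_of_cos {x y : EuclideanSpace ℝ (Fin 3)} (hx : ‖x‖ = 1) (hy : ‖y‖ = 1)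
    {s : ℝ} (hs0 : 0 < s) (hsπ : s < Real.pi) (hc : ⟪x, y⟫ = Real.cos s) :
    sphLog x y = (s / Real.sin s) • (y - Real.cos s • x) := by
  have h1 : -1 < ⟪x, y⟫ := by
    rw [hc]
    have := Real.cos_lt_cos_of_nonneg_of_le_pi hs0.le (le_refl Real.pi) hsπ
    rw [Real.cos_pi] at this; linarith
  have h2 : ⟪x, y⟫ < 1 := by rw [hc]; exact cos_lt_one' hs0 hsπ.le
  rw [sphLog_eq hx hy h1 h2, hc, Real.arccos_cos hs0.le hsπ.le]


lemma aux_keyN {s t σ τ p q : ℝ} (hs : 0 < s) (hs2 : s ≤ 1/2) (ht : 0 < t) (ht2 : t ≤ 1/2)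
    (hσs : σ ≤ s) (hσlb : s - s^3/4 ≤ σ) (hσ0 : 0 < σ)
    (hτt : τ ≤ t) (hτlb : t - t^3/4 ≤ τ) (hτ0 : 0 < τ)
    (hp1 : p ≤ 1) (hplb : 1 - s^2/2 ≤ p) (hq1 : q ≤ 1) (hqlb : 1 - t^2/2 ≤ q)
    (hp0 : 0 < p) (hq0 : 0 < q) :
    |2*(σ*τ) - s*t*(1+p*q)| ≤ s*t*(s^2+t^2)/2 := by
  have hst : 0 < s*t := mul_pos hs ht
  have h1 : (1 - s^2/2)*(1 - t^2/2) ≤ p*q :=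
    mul_le_mul hplb hqlb (by nlinarith) hp0.le
  have h2 : σ*τ ≤ s*t := mul_le_mul hσs hτt hτ0.le hs.le
  have h3 : (s - s^3/4)*(t - t^3/4) ≤ σ*τ :=
    mul_le_mul hσlb hτlb (by nlinarith) hσ0.le
  have h4 : p*q ≤ 1 := mul_le_one₀ hp1 hq0.le hq1
  rw [abs_le]
  constructor
  · nlinarith [mul_le_mul_of_nonneg_left h4 hst.le, mul_pos (mul_pos hs hs) (mul_pos ht ht)]
  · nlinarith [mul_le_mul_of_nonneg_left h1 hst.le, mul_pos (mul_pos hs hs) (mul_pos ht ht)]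

lemma aux_final_sum {s t T1 T2 T3 : ℝ} (hs : 0 < s) (ht : 0 < t) (hst : s + t ≤ 1)
    (h1 : T1 ≤ t*s*(s*t*(s^2+t^2)/2)/2) (h2 : T2 ≤ s*((s^2/2)*(t^2/2)))
    (h3 : T3 ≤ s*(s*t*(s^2+t^2)/2)/2) :
    T1 + T2 + T3 ≤ 3*(s+t)^4 := by
  have e0 : 0 < s + t := by linarith
  have a1 : s^2 ≤ (s+t)^2 := by nlinarith
  have a2 : t^2 ≤ (s+t)^2 := by nlinarith
  have a3 : s^2+t^2 ≤ (s+t)^2 := by nlinarith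
  have p2 : (0:ℝ) ≤ (s+t)^2 := by positivity
  have p4 : (0:ℝ) ≤ (s+t)^4 := by positivity
  have hpow : (s+t)^2 ≤ 1 := by nlinarith
  -- T1 core : s^2*t^2*(s^2+t^2) ≤ (s+t)^6 ≤ (s+t)^4
  have c1 : s^2*t^2*(s^2+t^2) ≤ (s+t)^4 := by
    have : s^2*t^2 ≤ (s+t)^2*(s+t)^2 := mul_le_mul a1 a2 (sq_nonneg t) p2
    have h6 : s^2*t^2*(s^2+t^2) ≤ ((s+t)^2*(s+t)^2)*(s+t)^2 :=
      mul_le_mul this a3 (by positivity) (by positivity)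
    calc s^2*t^2*(s^2+t^2) ≤ ((s+t)^2*(s+t)^2)*(s+t)^2 := h6
      _ = (s+t)^4*(s+t)^2 := by ring
      _ ≤ (s+t)^4*1 := mul_le_mul_of_nonneg_left hpow p4
      _ = (s+t)^4 := mul_one _
  have c2 : s^3*t^2 ≤ (s+t)^4 := by
    have b1 : s^3 ≤ (s+t)^3 := by nlinarith
    have : s^3*t^2 ≤ (s+t)^3*(s+t)^2 := mul_le_mul b1 a2 (sq_nonneg t) (by positivity)
    calc s^3*t^2 ≤ (s+t)^3*(s+t)^2 := this
      _ = (s+t)^4*(s+t) := by ring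
      _ ≤ (s+t)^4*1 := mul_le_mul_of_nonneg_left (by linarith) p4
      _ = (s+t)^4 := mul_one _
  have c3 : s^2*t*(s^2+t^2) ≤ (s+t)^4 := by
    have b1 : s^2*t ≤ (s+t)^2*(s+t) := by nlinarith
    have : s^2*t*(s^2+t^2) ≤ ((s+t)^2*(s+t))*(s+t)^2 :=
      mul_le_mul b1 a3 (by positivity) (by positivity)
    calc s^2*t*(s^2+t^2) ≤ ((s+t)^2*(s+t))*(s+t)^2 := this
      _ = (s+t)^4*(s+t) := by ring
      _ ≤ (s+t)^4*1 := mul_le_mul_of_nonneg_left (by linarith) p4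
      _ = (s+t)^4 := mul_one _
  nlinarith [c1, c2, c3]

lemma aux_norm3 {x v w : EuclideanSpace ℝ (Fin 3)} (hx : ‖x‖ = 1) (hv : ‖v‖ = 1)
    (hw : ‖w‖ = 1) (c1 c2 c3 : ℝ) :
    ‖c1 • x + c2 • v + c3 • w‖ ≤ |c1| + |c2| + |c3| := by
  calc ‖c1 • x + c2 • v + c3 • w‖ ≤ ‖c1 • x + c2 • v‖ + ‖c3 • w‖ := norm_add_le _ _
    _ ≤ ‖c1 • x‖ + ‖c2 • v‖ + ‖c3 • w‖ := by linarith [norm_add_le (c1 • x) (c2 • v)]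
    _ = |c1| + |c2| + |c3| := by
        rw [norm_smul, norm_smul, norm_smul, hx, hv, hw, Real.norm_eq_abs, Real.norm_eq_abs,
          Real.norm_eq_abs, mul_one, mul_one, mul_one]


lemma aux_B_bound {B p q s t : ℝ} (hB : B * (1 + p * q) = p + q)
    (hp0 : 0 < p) (hp1 : p < 1) (hq0 : 0 < q) (hq1 : q < 1)
    (hplb : 1 - s ^ 2 / 2 ≤ p) (hqlb : 1 - t ^ 2 / 2 ≤ q) :
    0 < B ∧ B ≤ 1 ∧ 1 - B ≤ s ^ 2 / 2 * (t ^ 2 / 2) := by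
  have hpq : 0 < 1 + p * q := by nlinarith
  have hB0 : 0 < B := by nlinarith
  have hB1 : B ≤ 1 := by nlinarith
  have h1B : (1 - B) * (1 + p * q) = (1 - p) * (1 - q) := by linear_combination -hB
  have h2 : 1 - B ≤ (1 - p) * (1 - q) := by
    nlinarith [mul_nonneg (by linarith : (0:ℝ) ≤ 1 - B) (mul_pos hp0 hq0).le]
  have h3 : (1 - p) * (1 - q) ≤ s ^ 2 / 2 * (t ^ 2 / 2) := by
    have := mul_le_mul (by linarith : 1 - p ≤ s ^ 2 / 2) (by linarith : 1 - q ≤ t ^ 2 / 2)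
      (by linarith) (by nlinarith)
    linarith
  exact ⟨hB0, hB1, by linarith⟩


lemma aux_sq_lt {p q : ℝ} (hp0 : 0 < p) (hp1 : p < 1) (hq0 : 0 < q) (hq1 : q < 1) :
    (p + q) ^ 2 < 2 + 2 * (p * q) := by nlinarith

lemma aux_lt_one {X : ℝ} (h0 : 0 < X) (h : X ^ 2 < 1) : X < 1 := by nlinarith

lemma aux_mul_lt_one {p q : ℝ} (hp0 : 0 < p) (hp1 : p < 1) (hq0 : 0 < q) (hq1 : q < 1) :
    p * q < 1 := by nlinarith

set_option maxHeartbeats 1000000 in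
/-- One rung of Schild's ladder on the unit sphere, transporting `sv` along `tw` for an
orthonormal triple `x, v, w`: for `s, t > 0` small enough the construction is well defined
(all logarithms are taken at non-antipodal distinct points) and its output `u(s,t)` equals the
exact parallel transport `Π_x^{tw}(s·v + (s²t/2)·w)` — the transport of `sv` plus the
curvature correction `(s²t/2)·w`, since `R(w,v)v = w` here — up to an error of total order
four in `(s,t)`.  This is the constant-curvature instance of the third-order expansion
`u = v + ½R(w,v)v + O(4)` of Schild's ladder. -/
theorem schild_ladder_sphere_taylor (x v w : EuclideanSpace ℝ (Fin 3))
    (hx : ‖x‖ = 1) (hv : ‖v‖ = 1) (hw : ‖w‖ = 1)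
    (hxv : ⟪x, v⟫ = 0) (hxw : ⟪x, w⟫ = 0) (hvw : ⟪v, w⟫ = 0) :
    ∃ δ > (0 : ℝ), ∃ C > (0 : ℝ), ∀ s t : ℝ, 0 < s → s < δ → 0 < t → t < δ →
      let xv := sphExp x (s • v)
      let xw := sphExp x (t • w)
      let b := sphLog xv xw
      let m := sphExp xv ((1 / 2 : ℝ) • b)
      let a := sphLog x m
      let z := sphExp x ((2 : ℝ) • a)
      let u := sphLog xw z
      ((-1 < ⟪xv, xw⟫ ∧ ⟪xv, xw⟫ < 1) ∧
        (-1 < ⟪x, m⟫ ∧ ⟪x, m⟫ < 1) ∧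
        (-1 < ⟪xw, z⟫ ∧ ⟪xw, z⟫ < 1)) ∧
      ‖u - sphPar x (t • w) (s • v + ((s ^ 2 * t) / 2) • w)‖ ≤ C * (s + t) ^ 4 := by
  have hπ : (3 : ℝ) < Real.pi := Real.pi_gt_three
  refine ⟨1 / 2, by norm_num, 3, by norm_num, ?_⟩
  intro s t hs hsd ht htd
  intro xv xw b m a z u
  have hs1 : s < 1 := by linarith
  have ht1 : t < 1 := by linarith
  have hp0 : 0 < Real.cos s := Real.cos_pos_of_mem_Ioo ⟨by linarith, by linarith⟩
  have hq0 : 0 < Real.cos t := Real.cos_pos_of_mem_Ioo ⟨by linarith, by linarith⟩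
  have hp1 : Real.cos s < 1 := cos_lt_one' hs (by linarith)
  have hq1 : Real.cos t < 1 := cos_lt_one' ht (by linarith)
  have hσ0 : 0 < Real.sin s := Real.sin_pos_of_pos_of_lt_pi hs (by linarith)
  have hτ0 : 0 < Real.sin t := Real.sin_pos_of_pos_of_lt_pi ht (by linarith)
  have hσs : Real.sin s ≤ s := Real.sin_le hs.le
  have hτt : Real.sin t ≤ t := Real.sin_le ht.le
  have hσlb : s - s ^ 3 / 4 < Real.sin s := by have := Real.sin_gt_sub_cube hs; have : 0 < s ^ 3 := (by positivity); linarith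
  have hτlb : t - t ^ 3 / 4 < Real.sin t := by have := Real.sin_gt_sub_cube ht; have : 0 < t ^ 3 := (by positivity); linarith
  have hplb : 1 - s ^ 2 / 2 ≤ Real.cos s := Real.one_sub_sq_div_two_le_cos
  have hqlb : 1 - t ^ 2 / 2 ≤ Real.cos t := Real.one_sub_sq_div_two_le_cos
  have hσq : Real.sin s ^ 2 = 1 - Real.cos s ^ 2 := by
    linarith [Real.sin_sq_add_cos_sq s]
  have hτq : Real.sin t ^ 2 = 1 - Real.cos t ^ 2 := by
    linarith [Real.sin_sq_add_cos_sq t]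
  have ixx : ⟪x, x⟫ = 1 := by rw [real_inner_self_eq_norm_sq, hx]; norm_num
  have ivv : ⟪v, v⟫ = 1 := by rw [real_inner_self_eq_norm_sq, hv]; norm_num
  have iww : ⟪w, w⟫ = 1 := by rw [real_inner_self_eq_norm_sq, hw]; norm_num
  have hvx : ⟪v, x⟫ = 0 := by rw [real_inner_comm]; exact hxv
  have hwx : ⟪w, x⟫ = 0 := by rw [real_inner_comm]; exact hxw
  have hwv : ⟪w, v⟫ = 0 := by rw [real_inner_comm]; exact hvw
  have exv : xv = Real.cos s • x + Real.sin s • v := sphExp_smul_unit x v s hs hv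
  have exw : xw = Real.cos t • x + Real.sin t • w := sphExp_smul_unit x w t ht hw
  have i1 : ⟪xv, xw⟫ = Real.cos s * Real.cos t := by
    rw [exv, exw]
    simp only [inner_add_left, inner_add_right, real_inner_smul_left, real_inner_smul_right,
      ixx, ivv, iww, hxv, hxw, hvw, hvx, hwx, hwv]
    ring
  have nxv : ‖xv‖ = 1 := by
    apply norm_eq_one_of_inner
    rw [exv]
    simp only [inner_add_left, inner_add_right, real_inner_smul_left, real_inner_smul_right,
      ixx, ivv, iww, hxv, hxw, hvw, hvx, hwx, hwv]
    linear_combination hσq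
  have nxw : ‖xw‖ = 1 := by
    apply norm_eq_one_of_inner
    rw [exw]
    simp only [inner_add_left, inner_add_right, real_inner_smul_left, real_inner_smul_right,
      ixx, ivv, iww, hxv, hxw, hvw, hvx, hwx, hwv]
    linear_combination hτq
  have i1lb : (-1 : ℝ) < ⟪xv, xw⟫ := by rw [i1]; have := mul_pos hp0 hq0; linarith
  have i1ub : ⟪xv, xw⟫ < 1 := by rw [i1]; exact aux_mul_lt_one hp0 hp1 hq0 hq1
  obtain ⟨k, hk0, hk2, hme⟩ := sphExp_half_log nxv nxw i1lb i1ub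
  rw [i1] at hk2
  have hme' : m = k • (xv + xw) := hme
  have hsum : xv + xw = (Real.cos s + Real.cos t) • x + Real.sin s • v + Real.sin t • w := by
    rw [exv, exw]; module
  have ixm : ⟪x, m⟫ = k * (Real.cos s + Real.cos t) := by
    rw [hme', hsum]
    simp only [inner_add_left, inner_add_right, real_inner_smul_left, real_inner_smul_right,
      ixx, ivv, iww, hxv, hxw, hvw, hvx, hwx, hwv]
    ring
  have ixm_pos : 0 < k * (Real.cos s + Real.cos t) := mul_pos hk0 (by linarith)
  have hkk : 0 < k ^ 2 := by positivity
  have hlt : (Real.cos s + Real.cos t) ^ 2 < 2 + 2 * (Real.cos s * Real.cos t) :=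
    aux_sq_lt hp0 hp1 hq0 hq1
  have ixm_ub : k * (Real.cos s + Real.cos t) < 1 := by
    refine aux_lt_one ixm_pos ?_
    calc (k * (Real.cos s + Real.cos t)) ^ 2
        = k ^ 2 * (Real.cos s + Real.cos t) ^ 2 := by ring
      _ < k ^ 2 * (2 + 2 * (Real.cos s * Real.cos t)) := by
          exact mul_lt_mul_of_pos_left hlt hkk
      _ = 1 := hk2
  have nm : ‖m‖ = 1 := by
    apply norm_eq_one_of_inner
    rw [hme', hsum]
    simp only [inner_add_left, inner_add_right, real_inner_smul_left, real_inner_smul_right,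
      ixx, ivv, iww, hxv, hxw, hvw, hvx, hwx, hwv]
    linear_combination k ^ 2 * hσq + k ^ 2 * hτq + hk2
  have ixm_lb : -1 < ⟪x, m⟫ := by rw [ixm]; linarith
  have ixm_ub' : ⟪x, m⟫ < 1 := by rw [ixm]; exact ixm_ub
  have hz : z = (2 * ⟪x, m⟫) • m - x := sphExp_two_log hx nm ixm_lb ixm_ub'
  have hB : (2 * k ^ 2 * (Real.cos s + Real.cos t)) * (1 + Real.cos s * Real.cos t)
      = Real.cos s + Real.cos t := by
    linear_combination (Real.cos s + Real.cos t) * hk2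
  set B := 2 * k ^ 2 * (Real.cos s + Real.cos t) with hBdef
  have hz2 : z = (B * (Real.cos s + Real.cos t) - 1) • x
      + (B * Real.sin s) • v + (B * Real.sin t) • w := by
    rw [hz, ixm, hme', hsum]
    match_scalars <;> (rw [hBdef]; ring)
  have ixwz : ⟪xw, z⟫ = Real.cos s := by
    rw [hz2, exw]
    simp only [inner_add_left, inner_add_right, inner_sub_left, inner_sub_right,
      real_inner_smul_left, real_inner_smul_right,
      ixx, ivv, iww, hxv, hxw, hvw, hvx, hwx, hwv]
    linear_combination hB + B * hτq
  have nz : ‖z‖ = 1 := by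
    apply norm_eq_one_of_inner
    rw [hz2]
    simp only [inner_add_left, inner_add_right, inner_sub_left, inner_sub_right,
      real_inner_smul_left, real_inner_smul_right,
      ixx, ivv, iww, hxv, hxw, hvw, hvx, hwx, hwv]
    linear_combination B ^ 2 * hσq + B ^ 2 * hτq + 2 * B * hB
  have hu : u = (s / Real.sin s) • (z - Real.cos s • xw) :=
    sphLog_eq_of_cos nxw nz hs (by linarith) ixwz
  have hR0 : (0 : ℝ) < 1 + Real.cos s * Real.cos t := by positivity
  have hpar : sphPar x (t • w) (s • v + ((s ^ 2 * t) / 2) • w)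
      = (-(s ^ 2 * t / 2 * Real.sin t)) • x + s • v + (s ^ 2 * t / 2 * Real.cos t) • w := by
    have hnt : ‖t • w‖ = t := by
      rw [norm_smul, hw, Real.norm_eq_abs, abs_of_pos ht, mul_one]
    have hinv : (t : ℝ)⁻¹ • (t • w) = w := by
      rw [smul_smul, inv_mul_cancel₀ ht.ne', one_smul]
    rw [sphPar, hnt, hinv]
    have hip : ⟪s • v + ((s ^ 2 * t) / 2) • w, w⟫ = (s ^ 2 * t) / 2 := by
      simp only [inner_add_left, real_inner_smul_left, hvw, iww]; ring
    rw [hip]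
    match_scalars <;> ring
  have hB2 : (B * (Real.cos s + Real.cos t) - 1 - Real.cos s * Real.cos t)
      * (1 + Real.cos s * Real.cos t) = -(Real.sin s ^ 2 * Real.sin t ^ 2) := by
    linear_combination (Real.cos s + Real.cos t) * hB + Real.sin t ^ 2 * hσq
      + (1 - Real.cos s ^ 2) * hτq
  have hG : (B - Real.cos s) * (1 + Real.cos s * Real.cos t) = Real.cos t * Real.sin s ^ 2 := by
    linear_combination hB - Real.cos t * hσq
  have hdiff : u - sphPar x (t • w) (s • v + ((s ^ 2 * t) / 2) • w)
      = ((s / Real.sin s) * (B * (Real.cos s + Real.cos t) - 1 - Real.cos s * Real.cos t)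
          + s ^ 2 * t / 2 * Real.sin t) • x
        + ((s / Real.sin s) * (B * Real.sin s) - s) • v
        + ((s / Real.sin s) * ((B - Real.cos s) * Real.sin t) - s ^ 2 * t / 2 * Real.cos t) • w := by
    rw [hu, hz2, exw, hpar]
    match_scalars <;> ring
  have hcx : (s / Real.sin s) * (B * (Real.cos s + Real.cos t) - 1 - Real.cos s * Real.cos t)
      + s ^ 2 * t / 2 * Real.sin t
      = -(Real.sin t * s * ((2 * (Real.sin s * Real.sin t)
          - s * t * (1 + Real.cos s * Real.cos t)) / (2 * (1 + Real.cos s * Real.cos t)))) := by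
    rw [show B * (Real.cos s + Real.cos t) - 1 - Real.cos s * Real.cos t
        = -(Real.sin s ^ 2 * Real.sin t ^ 2) / (1 + Real.cos s * Real.cos t) from by
      rw [eq_div_iff hR0.ne']; exact hB2]
    field_simp
    ring
  have hcv : (s / Real.sin s) * (B * Real.sin s) - s = s * (B - 1) := by
    field_simp
  have hcw : (s / Real.sin s) * ((B - Real.cos s) * Real.sin t) - s ^ 2 * t / 2 * Real.cos t
      = Real.cos t * s * ((2 * (Real.sin s * Real.sin t)
          - s * t * (1 + Real.cos s * Real.cos t)) / (2 * (1 + Real.cos s * Real.cos t))) := by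
    rw [show B - Real.cos s = Real.cos t * Real.sin s ^ 2 / (1 + Real.cos s * Real.cos t) from by
      rw [eq_div_iff hR0.ne']; exact hG]
    field_simp
  have hNb := aux_keyN hs (by linarith) ht (by linarith) hσs hσlb.le hσ0 hτt hτlb.le hτ0
    hp1.le hplb hq1.le hqlb hp0 hq0
  have h2R : (2 : ℝ) ≤ 2 * (1 + Real.cos s * Real.cos t) := by
    have := mul_pos hp0 hq0; linarith
  have hEb : |(2 * (Real.sin s * Real.sin t) - s * t * (1 + Real.cos s * Real.cos t))
      / (2 * (1 + Real.cos s * Real.cos t))| ≤ s * t * (s ^ 2 + t ^ 2) / 2 / 2 := by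
    rw [abs_div, abs_of_pos (by linarith : (0 : ℝ) < 2 * (1 + Real.cos s * Real.cos t))]
    calc |2 * (Real.sin s * Real.sin t) - s * t * (1 + Real.cos s * Real.cos t)|
          / (2 * (1 + Real.cos s * Real.cos t))
        ≤ (s * t * (s ^ 2 + t ^ 2) / 2) / (2 * (1 + Real.cos s * Real.cos t)) := by gcongr
      _ ≤ (s * t * (s ^ 2 + t ^ 2) / 2) / 2 := by gcongr
      _ = s * t * (s ^ 2 + t ^ 2) / 2 / 2 := rfl
  obtain ⟨hB0, hB1, h1B⟩ := aux_B_bound hB hp0 hp1 hq0 hq1 hplb hqlb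
  have bx : |(s / Real.sin s) * (B * (Real.cos s + Real.cos t) - 1 - Real.cos s * Real.cos t)
      + s ^ 2 * t / 2 * Real.sin t| ≤ t * s * (s * t * (s ^ 2 + t ^ 2) / 2) / 2 := by
    rw [hcx, abs_neg, abs_mul, abs_mul, abs_of_pos hτ0, abs_of_pos hs]
    calc Real.sin t * s * |(2 * (Real.sin s * Real.sin t)
          - s * t * (1 + Real.cos s * Real.cos t)) / (2 * (1 + Real.cos s * Real.cos t))|
        ≤ t * s * (s * t * (s ^ 2 + t ^ 2) / 2 / 2) := by
          apply mul_le_mul (mul_le_mul_of_nonneg_right hτt hs.le) hEb (abs_nonneg _) (by positivity)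
      _ = t * s * (s * t * (s ^ 2 + t ^ 2) / 2) / 2 := by ring

  have bv : |(s / Real.sin s) * (B * Real.sin s) - s| ≤ s * (s ^ 2 / 2 * (t ^ 2 / 2)) := by
    rw [hcv, abs_mul, abs_of_pos hs, abs_of_nonpos (by linarith : B - 1 ≤ 0)]
    rw [show -(B - 1) = 1 - B by ring]
    exact mul_le_mul_of_nonneg_left h1B hs.le
  have bw : |(s / Real.sin s) * ((B - Real.cos s) * Real.sin t) - s ^ 2 * t / 2 * Real.cos t|
      ≤ s * (s * t * (s ^ 2 + t ^ 2) / 2) / 2 := by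
    rw [hcw, abs_mul, abs_mul, abs_of_pos hq0, abs_of_pos hs]
    have h' : Real.cos t * s ≤ s := mul_le_of_le_one_left hs.le hq1.le
    calc Real.cos t * s * |(2 * (Real.sin s * Real.sin t)
          - s * t * (1 + Real.cos s * Real.cos t)) / (2 * (1 + Real.cos s * Real.cos t))|
        ≤ s * |(2 * (Real.sin s * Real.sin t)
          - s * t * (1 + Real.cos s * Real.cos t)) / (2 * (1 + Real.cos s * Real.cos t))| :=
          mul_le_mul_of_nonneg_right h' (abs_nonneg _)
      _ ≤ s * (s * t * (s ^ 2 + t ^ 2) / 2 / 2) := mul_le_mul_of_nonneg_left hEb hs.le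
      _ = s * (s * t * (s ^ 2 + t ^ 2) / 2) / 2 := by ring
  refine ⟨⟨⟨i1lb, i1ub⟩, ⟨ixm_lb, ixm_ub'⟩,
    ⟨by rw [ixwz]; linarith, by rw [ixwz]; exact hp1⟩⟩, ?_⟩
  rw [hdiff]
  refine le_trans (aux_norm3 hx hv hw _ _ _) ?_
  exact aux_final_sum hs ht (by linarith) bx bv bw
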